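/- Let 𝔠 be the category of compact Hausdorff spaces and F : 𝔠 → Ab a contravariant split-exact functor (i.e. for each pushout square with one leg split injective, the sequence 0 → F(X) → F(X₁) × F(X₂) → F(X₁₂) is exact at the first two spots, equivalently F(X) → F(X₁) ×_{F(X₁₂)} F(X₂) is an isomorphism). If F(X) = 0 for every contractible compact Hausdorff space X, then F is homotopy invariant: for every compact Hausdorff X, the map F(X × [0,1]) → F(X) induced by the inclusion x ↦ (x, 0) is an isomorphism. -/

import Mathlib

open CategoryTheory Opposite

namespace Stmt2Aux

variable (X : CompHaus)

/-- Setoid collapsing `X × {0}` to a point. -/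
def coneSetoid : Setoid (Prod (X : Type) unitInterval) where
  r a b := a = b ∨ (a.2 = 0 ∧ b.2 = 0)
  iseqv := by
    refine ⟨fun a => Or.inl rfl, ?_, ?_⟩
    · rintro a b (rfl | ⟨h1, h2⟩)
      · exact Or.inl rfl
      · exact Or.inr ⟨h2, h1⟩
    · rintro a b c (rfl | ⟨h1, h2⟩) (rfl | ⟨h3, h4⟩)
      · exact Or.inl rfl
      · exact Or.inr ⟨h3, h4⟩
      · exact Or.inr ⟨h1, h2⟩
      · exact Or.inr ⟨h1, h4⟩

/-- The cone on `X`, collapsing `X × {0}`. -/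
def Cone := Quotient (coneSetoid X)

instance : TopologicalSpace (Cone X) := instTopologicalSpaceQuotient

instance : CompactSpace (Cone X) := Quotient.compactSpace

/-- Map into a Hausdorff space used to prove the cone is Hausdorff. -/
noncomputable def coneEmb : Cone X → ℝ × (C((X : Type), ℝ) → ℝ) :=
  Quotient.lift (fun p => ((p.2 : ℝ), fun f => (p.2 : ℝ) * f p.1)) (by
    rintro a b (rfl | ⟨h1, h2⟩)
    · rfl
    · simp [h1, h2])

lemma coneEmb_continuous : Continuous (coneEmb X) := by
  apply Continuous.quotient_lift
  refine Continuous.prodMk (continuous_subtype_val.comp continuous_snd) ?_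
  refine continuous_pi fun f => ?_
  exact (continuous_subtype_val.comp continuous_snd).mul (f.continuous.comp continuous_fst)

lemma coneEmb_injective : Function.Injective (coneEmb X) := by
  rintro ⟨x, t⟩ ⟨y, u⟩ h
  have ht : (t : ℝ) = (u : ℝ) := congrArg Prod.fst h
  have htu : t = u := Subtype.ext ht
  by_cases h0 : t = 0
  · exact Quotient.sound (Or.inr ⟨h0, by rw [← htu]; exact h0⟩)
  · have hmul : ∀ f : C((X : Type), ℝ), (t : ℝ) * f x = (u : ℝ) * f y :=
      fun f => congrFun (congrArg Prod.snd h) f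
    have hxy : x = y := by
      by_contra hxy
      haveI : T2Space (X : Type) := inferInstance
      haveI : CompactSpace (X : Type) := inferInstance
      haveI : T1Space (X : Type) := T2Space.t1Space
      haveI : NormalSpace (X : Type) := inferInstance
      obtain ⟨f, hfx, hfy, -⟩ := exists_continuous_zero_one_of_isClosed
        (isClosed_singleton (x := x)) (isClosed_singleton (x := y))
        (Set.disjoint_singleton.mpr hxy)
      have h1 : f x = 0 := by simpa using hfx rfl
      have h2 : f y = 1 := by simpa using hfy rfl
      have := hmul f
      rw [h1, h2, mul_zero, mul_one] at this
      have htne : (t : ℝ) ≠ 0 := fun hc => h0 (Subtype.ext hc)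
      rw [ht] at htne
      exact htne this.symm
    subst hxy htu
    rfl

instance : T2Space (Cone X) :=
  (((coneEmb_continuous X).isClosedEmbedding (coneEmb_injective X))).isEmbedding.t2Space

/-- `X × [0,1]` as an object of CompHaus. -/
abbrev XI : CompHaus := CompHaus.of (Prod (X : Type) unitInterval)

/-- The cone as an object of CompHaus. -/
noncomputable abbrev ConeC : CompHaus := CompHaus.of (Cone X)

/-- inclusion at 0 -/
def inc0 : X ⟶ XI X := ConcreteCategory.ofHom ⟨fun x => (x, (0 : unitInterval)), continuous_id.prodMk continuous_const⟩

/-- projection -/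
def proj : XI X ⟶ X := ConcreteCategory.ofHom ⟨fun p => p.1, continuous_fst⟩

lemma inc0_proj : inc0 X ≫ proj X = 𝟙 X := by ext; rfl

/-- quotient map onto the cone -/
noncomputable def conQ : XI X ⟶ ConeC X := ConcreteCategory.ofHom ⟨Quotient.mk _, continuous_quotient_mk'⟩

/-- the point -/
abbrev pt : CompHaus := CompHaus.of PUnit

/-- terminal map -/
def toPt : X ⟶ pt := ConcreteCategory.ofHom ⟨fun _ => PUnit.unit, continuous_const⟩

section Nonempty

variable [Nonempty (X : Type)]

/-- vertex map -/
noncomputable def vtx : pt ⟶ ConeC X :=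
  ConcreteCategory.ofHom ⟨fun _ => Quotient.mk _ (Classical.arbitrary (X : Type), (0 : unitInterval)), continuous_const⟩

lemma mk_zero_eq (x : (X : Type)) :
    (Quotient.mk (coneSetoid X) (x, (0 : unitInterval))) =
      Quotient.mk _ (Classical.arbitrary (X : Type), (0 : unitInterval)) :=
  Quotient.sound (Or.inr ⟨rfl, rfl⟩)

lemma cone_commSq : inc0 X ≫ conQ X = toPt X ≫ vtx X := by
  ext x
  exact mk_zero_eq X x

noncomputable def coneIsColimit :
    Limits.IsColimit (Limits.PushoutCocone.mk (conQ X) (vtx X) (cone_commSq X)) := by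
  refine Limits.PushoutCocone.IsColimit.mk _ (fun s => ?_) (fun s => ?_) (fun s => ?_)
    (fun s m hl hr => ?_)
  · refine ConcreteCategory.ofHom ⟨Quotient.lift (⇑(ConcreteCategory.hom s.inl)) ?_,
      Continuous.quotient_lift (ConcreteCategory.hom s.inl).continuous _⟩
    rintro ⟨x, t⟩ ⟨y, u⟩ (heq | ⟨h1, h2⟩)
    · rw [heq]
    · dsimp at h1 h2
      subst h1; subst h2
      have hx := ConcreteCategory.congr_hom s.condition x
      have hy := ConcreteCategory.congr_hom s.condition y
      exact hx.trans hy.symm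
  · ext p
    rfl
  · ext p
    exact ConcreteCategory.congr_hom s.condition (Classical.arbitrary (X : Type))
  · ext c
    obtain ⟨⟨x, t⟩, rfl⟩ := Quotient.exists_rep c
    exact ConcreteCategory.congr_hom hl (x, t)

noncomputable def coneIsPushout : IsPushout (inc0 X) (toPt X) (conQ X) (vtx X) :=
  IsPushout.of_isColimit (coneIsColimit X)

/-- the contraction homotopy, as a bare function -/
noncomputable def coneHomotopyFun : unitInterval × Cone X → Cone X :=
  fun p => Quotient.lift
    (fun q : Prod (X : Type) unitInterval => Quotient.mk (coneSetoid X) (q.1, p.1 * q.2))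
    (by
      rintro ⟨x, t⟩ ⟨y, u⟩ (heq | ⟨h1, h2⟩)
      · rw [heq]
      · dsimp at h1 h2
        subst h1; subst h2
        exact Quotient.sound (Or.inr ⟨mul_zero _, mul_zero _⟩)) p.2

lemma coneHomotopyFun_continuous : Continuous (coneHomotopyFun X) := by
  have hq : Topology.IsQuotientMap (Quotient.mk (coneSetoid X)) :=
    isQuotientMap_quotient_mk'
  apply hq.continuous_lift_prod_right
  show Continuous fun p : unitInterval × (Prod (X : Type) unitInterval) =>
    Quotient.mk (coneSetoid X) ((p.2).1, p.1 * (p.2).2)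
  apply Continuous.comp continuous_quotient_mk'
  refine Continuous.prodMk (continuous_fst.comp continuous_snd) ?_
  have : Continuous fun p : unitInterval × (Prod (X : Type) unitInterval) =>
      ((p.1 : ℝ) * ((p.2).2 : ℝ)) :=
    (continuous_subtype_val.comp continuous_fst).mul
      (continuous_subtype_val.comp (continuous_snd.comp continuous_snd))
  exact Continuous.subtype_mk this _

noncomputable instance : ContractibleSpace (Cone X) := by
  rw [contractible_iff_id_nullhomotopic]
  refine ⟨Quotient.mk _ (Classical.arbitrary (X : Type), (0 : unitInterval)), ?_⟩
  refine ⟨ContinuousMap.Homotopy.symm ?_⟩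
  exact
    { toFun := coneHomotopyFun X
      continuous_toFun := coneHomotopyFun_continuous X
      map_zero_left := by
        intro c
        obtain ⟨⟨x, t⟩, rfl⟩ := Quotient.exists_rep c
        show Quotient.mk (coneSetoid X) (x, 0 * t) = _
        rw [zero_mul]
        exact mk_zero_eq X x
      map_one_left := by
        intro c
        obtain ⟨⟨x, t⟩, rfl⟩ := Quotient.exists_rep c
        show Quotient.mk (coneSetoid X) (x, 1 * t) = _
        rw [one_mul]
        rfl }

end Nonempty

end Stmt2Aux

open Stmt2Aux in
/-- A contravariant split-exact functor `F` from compact Hausdorff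
spaces to abelian groups which vanishes on contractible spaces is homotopy
invariant: `F(X × [0,1]) → F(X)`, induced by `x ↦ (x, 0)`, is an isomorphism. -/
theorem stmt_2 (F : CompHausᵒᵖ ⥤ AddCommGrpCat)
    -- split exactness: for every pushout square with the leg `i1` split injective,
    -- `F(W) → F(X1) ×_{F(X12)} F(X2)` is bijective:
    (hsplit : ∀ (X12 X1 X2 W : CompHaus) (i1 : X12 ⟶ X1) (i2 : X12 ⟶ X2)
      (j1 : X1 ⟶ W) (j2 : X2 ⟶ W), IsPushout i1 i2 j1 j2 →
      (∃ r : X1 ⟶ X12, i1 ≫ r = 𝟙 X12) →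
      ∀ (a1 : F.obj (op X1)) (a2 : F.obj (op X2)),
        F.map i1.op a1 = F.map i2.op a2 →
        ∃! a : F.obj (op W), F.map j1.op a = a1 ∧ F.map j2.op a = a2)
    -- `F` vanishes on contractible compact Hausdorff spaces:
    (hcontr : ∀ Z : CompHaus, ContractibleSpace Z → Subsingleton (F.obj (op Z))) :
    -- homotopy invariance:
    ∀ X : CompHaus,
      Function.Bijective
        (F.map (Quiver.Hom.op
          (ConcreteCategory.ofHom ⟨fun x => (x, (0 : unitInterval)), by continuity⟩ :
            X ⟶ CompHaus.of (Prod (X : Type) unitInterval)))) := by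
  intro X
  show Function.Bijective (F.map (inc0 X).op)
  have hsurj : Function.Surjective (F.map (inc0 X).op) := by
    intro b
    refine ⟨F.map (proj X).op b, ?_⟩
    have : F.map (proj X).op ≫ F.map (inc0 X).op = 𝟙 _ := by
      rw [← F.map_comp, ← op_comp, inc0_proj, op_id, F.map_id]
    calc F.map (inc0 X).op (F.map (proj X).op b)
        = (F.map (proj X).op ≫ F.map (inc0 X).op) b := rfl
      _ = b := by rw [this]; rfl
  constructor
  · -- injectivity
    rcases isEmpty_or_nonempty (X : Type) with hemp | hne
    · -- X empty : inc0 is an iso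
      have hpi : proj X ≫ inc0 X = 𝟙 (XI X) := by
        ext ⟨x, t⟩ <;>
        exact (hemp.false x).elim
      intro a b hab
      have : F.map (inc0 X).op ≫ F.map (proj X).op = 𝟙 _ := by
        rw [← F.map_comp, ← op_comp, hpi, op_id, F.map_id]
      calc a = (F.map (inc0 X).op ≫ F.map (proj X).op) a := by rw [this]; rfl
        _ = F.map (proj X).op (F.map (inc0 X).op a) := rfl
        _ = F.map (proj X).op (F.map (inc0 X).op b) := by rw [hab]
        _ = (F.map (inc0 X).op ≫ F.map (proj X).op) b := rfl
        _ = b := by rw [this]; rfl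
    · have key : ∀ a : F.obj (op (XI X)), F.map (inc0 X).op a = 0 → a = 0 := by
        intro a ha
        have hsub : Subsingleton (F.obj (op (ConeC X))) :=
          hcontr (ConeC X) (inferInstance : ContractibleSpace (Cone X))
        obtain ⟨c, ⟨hc1, _⟩, _⟩ :=
          hsplit X (XI X) pt (ConeC X) (inc0 X) (toPt X) (conQ X) (vtx X)
            (coneIsPushout X) ⟨proj X, inc0_proj X⟩ a 0
            (by rw [ha, map_zero])
        have hc0 : c = 0 := Subsingleton.elim _ _
        rw [← hc1, hc0, map_zero]
      intro a b hab
      have : F.map (inc0 X).op (a - b) = 0 := by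
        rw [map_sub, hab, sub_self]
      have := key _ this
      exact sub_eq_zero.mp this
  · exact hsurj
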